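/- arXiv:1507.06572 — 2 statements merged into one kernel-verified Lean document; each statement's English description precedes it below -/
import Mathlib

section
/- Let G be a module over Z_p (the integers localized at a prime p) with partial decomposition bases C and C'. Then for every equivalence class e of Ulm sequences, ŵ_C(e,G) = ŵ_{C'}(e,G); that is, the invariant ŵ(e,G) does not depend on the choice of partial decomposition basis. -/
noncomputable section

namespace UlmW

universe u

variable {R : Type*} [CommRing R]

/-- The submodule `p^α M`, defined by transfinite recursion on `α`. -/
def ppow {M : Type u} [AddCommGroup M] [Module R M] (p : R) (α : Ordinal.{u}) :
    Submodule R M :=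
  Ordinal.limitRecOn α ⊤ (fun _ S => Submodule.map (LinearMap.lsmul R M p) S)
    fun β _ ih => ⨅ (γ : Set.Iio β), ih γ.1 γ.2

open scoped Classical in
/-- The `p`-height of `x`, with `⊤` playing the role of `∞`. -/
def pheight {M : Type u} [AddCommGroup M] [Module R M] (p : R) (x : M) :
    WithTop Ordinal.{u} :=
  if h : ∃ α : Ordinal.{u}, x ∈ ppow p α ∧ x ∉ ppow p (α + 1) then (h.choose : WithTop Ordinal)
  else ⊤

/-- `H⁰ = {x : ∃ a ≠ 0, a • x ∈ H}`. -/
def hull {M : Type u} [AddCommGroup M] [Module R M] (H : Submodule R M) : Set M :=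
  {x | ∃ a : R, a ≠ 0 ∧ a • x ∈ H}

/-- `X` is a decomposition set with respect to the single prime `p`. -/
def IsDecompWrt {M : Type u} [AddCommGroup M] [Module R M] (p : R) (X : Set M) : Prop :=
  (LinearIndependent R (fun x : X => (x : M))) ∧
  (∀ x ∈ X, ∀ a : R, a ≠ 0 → a • x ≠ 0) ∧
  (∀ s : Finset M, ↑s ⊆ X → ∀ c : M → R,
    pheight p (∑ x ∈ s, c x • x) = s.inf fun x => pheight p (c x • x))

/-- `X` is a decomposition set (with respect to every prime of `R`). -/
def IsDecompositionSet (R : Type*) [CommRing R] {M : Type u} [AddCommGroup M] [Module R M]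
    (X : Set M) : Prop :=
  ∀ p : R, Prime p → IsDecompWrt p X

/-- partial decomposition basis, heights taken w.r.t. a fixed prime `p`. -/
def IsPDBWrt {M : Type u} [AddCommGroup M] [Module R M] (p : R) (C : Set (Set M)) : Prop :=
  C.Nonempty ∧ (∀ X ∈ C, X.Finite) ∧ (∀ X ∈ C, IsDecompWrt p X) ∧
  ∀ X ∈ C, ∀ x : M, ∃ Y ∈ C, X ⊆ Y ∧ x ∈ hull (Submodule.span R Y)

/-- partial decomposition basis (heights w.r.t. all primes of `R`). -/
def IsPDB (R : Type*) [CommRing R] {M : Type u} [AddCommGroup M] [Module R M] (C : Set (Set M)) : Prop :=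
  C.Nonempty ∧ (∀ X ∈ C, X.Finite) ∧ (∀ X ∈ C, IsDecompositionSet R X) ∧
  ∀ X ∈ C, ∀ x : M, ∃ Y ∈ C, X ⊆ Y ∧ x ∈ hull (Submodule.span R Y)

/-- A partial isomorphism system `I : G ≅_p H`. -/
def IsPartialIsoSystem {M N : Type*} [AddCommGroup M] [Module R M]
    [AddCommGroup N] [Module R N] (I : Set (M →ₗ.[R] N)) : Prop :=
  I.Nonempty ∧
  (∀ f ∈ I, Function.Injective f.toFun) ∧
  (∀ f ∈ I, ∀ a : M, ∃ g ∈ I, f ≤ g ∧ a ∈ g.domain) ∧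
  (∀ f ∈ I, ∀ b : N, ∃ g ∈ I, f ≤ g ∧ ∃ y : g.domain, g y = b)

/-- The Ulm sequence of `x`: `U(x) = (|pⁱ x|)ᵢ`. -/
def UlmSeqOf {M : Type u} [AddCommGroup M] [Module R M] (p : R) (x : M) :
    ℕ → WithTop Ordinal.{u} :=
  fun i => pheight p ((p ^ i) • x)

/-- `u` is an Ulm sequence. -/
def IsUlmSeq (u : ℕ → WithTop Ordinal.{u}) : Prop :=
  ∀ i, (u i = ⊤ → u (i + 1) = ⊤) ∧ (u i ≠ ⊤ → u i < u (i + 1))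

/-- Equivalence of Ulm sequences. -/
def UlmEquiv (u v : ℕ → WithTop Ordinal.{u}) : Prop :=
  ∃ m n : ℕ, ∀ i, u (i + n) = v (i + m)

/-- `X` contains at least `n` elements whose Ulm sequence is equivalent to `u`. -/
def HasAtLeast {M : Type u} [AddCommGroup M] [Module R M] (p : R)
    (u : ℕ → WithTop Ordinal.{u}) (n : ℕ) (X : Set M) : Prop :=
  ∃ s : Finset M, ↑s ⊆ X ∧ n ≤ s.card ∧ ∀ x ∈ s, UlmEquiv (UlmSeqOf p x) u

/-- `ŵ_C(e,G)` where `e` is the class of the Ulm sequence `u`. -/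
def wHat {M : Type u} [AddCommGroup M] [Module R M] (p : R) (C : Set (Set M))
    (u : ℕ → WithTop Ordinal.{u}) : ℕ∞ :=
  sSup {N : ℕ∞ | ∃ n : ℕ, N = (n : ℕ∞) ∧ ∃ X ∈ C, HasAtLeast p u n X}

/-- `x` is proper with respect to `S`. -/
def IsProper {M : Type u} [AddCommGroup M] [Module R M] (p : R) (S : Submodule R M)
    (x : M) : Prop :=
  ∀ s ∈ S, pheight p (x + s) ≤ pheight p x

/-- `H` is a nice submodule. -/
def IsNice {M : Type u} [AddCommGroup M] [Module R M] (p : R) (H : Submodule R M) : Prop :=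
  ∀ x : M, ∃ h ∈ H, ∀ h' ∈ H, pheight p (x + h') ≤ pheight p (x + h)

/-- The Ulm invariant `u_p(σ, M)`: the dimension of `(p^σ M)[p]/(p^{σ+1} M)[p]`
over the residue field `R/(p)`. -/
def uCard (p : R) (M : Type u) [AddCommGroup M] [Module R M] (σ : Ordinal.{u}) :
    Cardinal :=
  let V : Submodule R M := ppow p σ ⊓ Submodule.torsionBy R M p
  let W : Submodule R V := (ppow p (σ + 1) ⊓ Submodule.torsionBy R M p).comap V.subtype
  Module.rank (R ⧸ Ideal.span {p})
    ((V ⧸ W) ⧸ (Ideal.span {p} • (⊤ : Submodule R (V ⧸ W))))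

/-- `û_p(σ, M) = min (u_p(σ, M), ω)`. -/
def uHat (p : R) (M : Type u) [AddCommGroup M] [Module R M] (σ : Ordinal.{u}) : Cardinal :=
  min (uCard p M σ) Cardinal.aleph0

/-- `û_p(∞, M) = min (dim (p^∞ M)[p], ω)`. -/
def uHatInf (p : R) (M : Type u) [AddCommGroup M] [Module R M] : Cardinal :=
  let V : Submodule R M := (⨅ α : Ordinal.{u}, ppow p α) ⊓ Submodule.torsionBy R M p
  min (Module.rank (R ⧸ Ideal.span {p})
    (V ⧸ (Ideal.span {p} • (⊤ : Submodule R V)))) Cardinal.aleph0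

end UlmW

open UlmW

/-- The ideal `(p) ⊆ ℤ` is prime. -/
instance zpSpanPrime (p : ℤ) [hp : Fact (Prime p)] : (Ideal.span {p} : Ideal ℤ).IsPrime :=
  (Ideal.span_singleton_prime hp.out.ne_zero).mpr hp.out

/-- `ℤ_(p)`, the integers localized at the prime `p`. -/
abbrev Zp (p : ℤ) [Fact (Prime p)] : Type :=
  Localization.AtPrime (Ideal.span {p} : Ideal ℤ)


universe u

open UlmW


namespace UlmW
section Aux
universe v
variable {R : Type*} [CommRing R]
variable {M : Type v} [AddCommGroup M] [Module R M] {p : R}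

theorem ppow_zero : (ppow p 0 : Submodule R M) = ⊤ := Ordinal.limitRecOn_zero ..

theorem ppow_succ (α : Ordinal.{v}) :
    (ppow p (α + 1) : Submodule R M) = Submodule.map (LinearMap.lsmul R M p) (ppow p α) :=
  Ordinal.limitRecOn_succ ..

theorem ppow_limit {α : Ordinal.{v}} (hα : Order.IsSuccLimit α) :
    (ppow p α : Submodule R M) = ⨅ (γ : Set.Iio α), ppow p γ.1 :=
  Ordinal.limitRecOn_limit _ _ _ _ hα

theorem ppow_succ_le (α : Ordinal.{v}) : (ppow p (α + 1) : Submodule R M) ≤ ppow p α := by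
  rw [ppow_succ]
  rintro x ⟨y, hy, rfl⟩
  exact Submodule.smul_mem _ _ hy

theorem ppow_anti : ∀ {α β : Ordinal.{v}}, α ≤ β → (ppow p β : Submodule R M) ≤ ppow p α := by
  intro α β
  induction β using Ordinal.induction generalizing α with
  | h β IH =>
    intro hαβ
    rcases eq_or_lt_of_le hαβ with rfl | hlt
    · exact le_rfl
    rcases Ordinal.zero_or_succ_or_isSuccLimit β with rfl | ⟨γ, rfl⟩ | hβ
    · exact absurd hlt (not_lt_zero (a := α))
    · rw [← Ordinal.add_one_eq_succ] at hlt ⊢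
      exact (ppow_succ_le γ).trans (IH γ (Order.lt_succ γ)
        (Order.lt_succ_iff.mp (by rwa [Ordinal.add_one_eq_succ] at hlt)))
    · rw [ppow_limit hβ]
      exact iInf_le (fun γ : Set.Iio β => ppow p γ.1) ⟨α, hlt⟩

theorem smul_mem_ppow_succ {α : Ordinal.{v}} {x : M} (hx : x ∈ ppow p α) :
    p • x ∈ ppow p (α + 1) := by
  rw [ppow_succ]
  exact ⟨x, hx, rfl⟩

theorem mem_ppow_all_of_not_exists {x : M}
    (h : ¬ ∃ α : Ordinal.{v}, x ∈ ppow p α ∧ x ∉ ppow p (α + 1)) :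
    ∀ α : Ordinal.{v}, x ∈ ppow p α := by
  intro α
  induction α using Ordinal.induction with
  | h α IH =>
    rcases Ordinal.zero_or_succ_or_isSuccLimit α with rfl | ⟨γ, rfl⟩ | hα
    · rw [ppow_zero]; trivial
    · rw [← Ordinal.add_one_eq_succ]
      by_contra hmem
      exact h ⟨γ, IH γ (Order.lt_succ γ), hmem⟩
    · rw [ppow_limit hα]
      exact Submodule.mem_iInf _ |>.mpr fun γ => IH γ.1 γ.2

open scoped Classical in
theorem coe_le_pheight {x : M} {α : Ordinal.{v}} :
    (α : WithTop Ordinal.{v}) ≤ pheight p x ↔ x ∈ ppow p α := by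
  rw [pheight]
  split_ifs with h
  · obtain ⟨hmem, hnot⟩ := h.choose_spec
    constructor
    · intro hle
      exact ppow_anti (WithTop.coe_le_coe.mp hle) hmem
    · intro hx
      by_contra hgt
      push_neg at hgt
      have : h.choose + 1 ≤ α := by rw [Ordinal.add_one_eq_succ]; exact Order.succ_le_of_lt (WithTop.coe_lt_coe.mp hgt)
      exact hnot (ppow_anti this hx)
  · simp only [le_top, true_iff]
    exact mem_ppow_all_of_not_exists h α

theorem pheight_eq_top_iff {x : M} :
    pheight p x = ⊤ ↔ ∀ α : Ordinal.{v}, x ∈ ppow p α := by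
  constructor
  · intro h α
    exact coe_le_pheight.mp (le_of_le_of_eq le_top h.symm)
  · intro h
    rw [pheight]
    split_ifs with hh
    · exact absurd (h _) hh.choose_spec.2
    · rfl


theorem withTop_le_iff_forall_coe {a b : WithTop Ordinal.{v}}
    (h : ∀ α : Ordinal.{v}, (α : WithTop Ordinal.{v}) ≤ a → (α : WithTop Ordinal.{v}) ≤ b) :
    a ≤ b := by
  cases a with
  | top =>
    cases b with
    | top => exact le_rfl
    | coe β =>
      have := h (β + 1) le_top
      rw [WithTop.coe_le_coe] at this
      exact absurd this (by rw [Ordinal.add_one_eq_succ]; exact (Order.lt_succ β).not_ge)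
  | coe α => exact h α le_rfl

theorem pheight_le_of_mem_imp {x y : M}
    (h : ∀ α : Ordinal.{v}, x ∈ ppow p α → y ∈ ppow p α) : pheight p x ≤ pheight p y :=
  withTop_le_iff_forall_coe fun α hα => coe_le_pheight.mpr (h α (coe_le_pheight.mp hα))

theorem pheight_eq_of_mem_iff {x y : M}
    (h : ∀ α : Ordinal.{v}, x ∈ ppow p α ↔ y ∈ ppow p α) : pheight p x = pheight p y :=
  le_antisymm (pheight_le_of_mem_imp fun α => (h α).mp)
    (pheight_le_of_mem_imp fun α => (h α).mpr)

theorem pheight_zero : pheight p (0 : M) = ⊤ :=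
  pheight_eq_top_iff.mpr fun _ => Submodule.zero_mem _

theorem pheight_smul_unit (w : Rˣ) (x : M) : pheight p ((w : R) • x) = pheight p x :=
  pheight_eq_of_mem_iff fun α =>
    ⟨fun hm => by
      have := Submodule.smul_mem (ppow p α) ((w⁻¹ : Rˣ) : R) hm
      rwa [← smul_assoc, smul_eq_mul, Units.inv_mul, one_smul] at this,
     fun hm => Submodule.smul_mem _ _ hm⟩

theorem ulmSeqOf_smul_pow (s : ℕ) (x : M) (i : ℕ) :
    UlmSeqOf p (p ^ s • x) i = UlmSeqOf p x (i + s) := by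
  unfold UlmSeqOf
  rw [smul_smul, ← pow_add]

theorem ulmSeqOf_smul_unit (w : Rˣ) (x : M) (i : ℕ) :
    UlmSeqOf p ((w : R) • x) i = UlmSeqOf p x i := by
  unfold UlmSeqOf
  rw [smul_comm, pheight_smul_unit]

theorem ulmSeqOf_smul (w : Rˣ) (s : ℕ) (x : M) (i : ℕ) :
    UlmSeqOf p (((w : R) * p ^ s) • x) i = UlmSeqOf p x (i + s) := by
  rw [mul_smul, ulmSeqOf_smul_unit, ulmSeqOf_smul_pow]

theorem ulmSeqOf_zero_smul (x : M) (i : ℕ) :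
    UlmSeqOf p ((0 : R) • x) i = ⊤ := by
  unfold UlmSeqOf
  rw [zero_smul, smul_zero, pheight_zero]


theorem ulmSeqOf_finsupp_sum {M : Type v} [AddCommGroup M] [Module R M] {p : R} {B : Set M}
    (hB : IsDecompWrt p B) (f : M →₀ R) (hf : ↑f.support ⊆ B) (i : ℕ) :
    UlmSeqOf p (f.sum fun b r => r • b) i
      = f.support.inf fun b => UlmSeqOf p (f b • b) i := by
  have h := hB.2.2 f.support hf (fun b => p ^ i * f b)
  have e1 : (p ^ i) • (f.sum fun b r => r • b) = ∑ b ∈ f.support, (p ^ i * f b) • b := by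
    rw [Finsupp.sum, Finset.smul_sum]
    exact Finset.sum_congr rfl fun b _ => by rw [smul_smul]
  show pheight p ((p ^ i) • (f.sum fun b r => r • b)) = _
  rw [e1, h]
  exact Finset.inf_congr rfl fun b _ => by
    show pheight p _ = pheight p _
    rw [mul_smul]

theorem ulmSeqOf_sum_le_term {M : Type v} [AddCommGroup M] [Module R M] {p : R} {B : Set M}
    (hB : IsDecompWrt p B) (f : M →₀ R) (hf : ↑f.support ⊆ B) (i : ℕ) {b₀ : M}
    (hb₀ : b₀ ∈ f.support) :
    UlmSeqOf p (f.sum fun b r => r • b) i ≤ UlmSeqOf p (f b₀ • b₀) i := by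
  rw [ulmSeqOf_finsupp_sum hB f hf i]
  exact Finset.inf_le hb₀

theorem finsupp_eq_zero_of_indep {M : Type v} [AddCommGroup M] [Module R M] {B : Set M}
    (hB : LinearIndependent R (fun x : B => (x : M)))
    (f : M →₀ R) (hf : ↑f.support ⊆ B) (h : (f.sum fun b r => r • b) = 0) : f = 0 := by
  have h2 := (linearIndepOn_iff (v := id)).mp hB f ((Finsupp.mem_supported R f).mpr hf)
  apply h2
  rw [Finsupp.linearCombination_apply]
  simpa using h

theorem finsupp_reps_eq {M : Type v} [AddCommGroup M] [Module R M] {B : Set M}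
    (hB : LinearIndependent R (fun x : B => (x : M)))
    (f g : M →₀ R) (hf : ↑f.support ⊆ B) (hg : ↑g.support ⊆ B)
    (h : (f.sum fun b r => r • b) = (g.sum fun b r => r • b)) : f = g := by
  classical
  have hsub : ↑(f - g).support ⊆ B := by
    intro b hb
    rcases Finset.mem_union.mp (Finsupp.support_sub (f := f) (g := g) hb) with h1 | h1
    · exact hf h1
    · exact hg h1
  have : ((f - g).sum fun b r => r • b) = 0 := by
    rw [Finsupp.sum_sub_index (fun a b₁ b₂ => sub_smul b₁ b₂ a)]
    rw [h]; exact sub_self _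
  have := finsupp_eq_zero_of_indep hB _ hsub this
  exact sub_eq_zero.mp this

theorem ulmEquiv_refl (u : ℕ → WithTop Ordinal.{v}) : UlmEquiv u u := ⟨0, 0, fun _ => rfl⟩

theorem ulmEquiv_symm {u v : ℕ → WithTop Ordinal.{v}} (h : UlmEquiv u v) : UlmEquiv v u := by
  obtain ⟨m, n, h⟩ := h
  exact ⟨n, m, fun i => (h i).symm⟩

theorem ulmEquiv_trans {u v w : ℕ → WithTop Ordinal.{v}} (h1 : UlmEquiv u v)
    (h2 : UlmEquiv v w) : UlmEquiv u w := by
  obtain ⟨m, n, h1⟩ := h1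
  obtain ⟨m', n', h2⟩ := h2
  refine ⟨m + m', n' + n, fun i => ?_⟩
  rw [show i + (n' + n) = (i + n') + n by ring, h1, show i + n' + m = (i + m) + n' by ring, h2,
    show i + m + m' = i + (m + m') by ring]

theorem ulmEquiv_of_tail_eq {u v : ℕ → WithTop Ordinal.{v}} {N : ℕ}
    (h : ∀ i, N ≤ i → u i = v i) : UlmEquiv u v :=
  ⟨N, N, fun i => h (i + N) (Nat.le_add_left _ _)⟩

theorem hull_mono {M : Type v} [AddCommGroup M] [Module R M] {H H' : Submodule R M}
    (h : H ≤ H') : hull H ⊆ hull H' := fun x ⟨a, ha, hax⟩ => ⟨a, ha, h hax⟩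

theorem absorb {M : Type v} [AddCommGroup M] [Module R M] {p : R} {C : Set (Set M)}
    (hC : IsPDBWrt p C) {X : Set M} (hX : X ∈ C) (S : Finset M) :
    ∃ Y ∈ C, X ⊆ Y ∧ ∀ g ∈ S, g ∈ hull (Submodule.span R Y) := by
  classical
  induction S using Finset.induction with
  | empty => exact ⟨X, hX, subset_rfl, by simp⟩
  | @insert a S ha ih =>
    obtain ⟨Y, hY, hXY, hcov⟩ := ih
    obtain ⟨Y', hY', hYY', ha'⟩ := hC.2.2.2 Y hY a
    refine ⟨Y', hY', hXY.trans hYY', fun g hg => ?_⟩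
    rcases Finset.mem_insert.mp hg with rfl | hg
    · exact ha'
    · exact hull_mono (Submodule.span_mono hYY') (hcov g hg)

end Aux
end UlmW

section ZpSec
variable (p : ℤ) [Fact (Prime p)]

instance zp_isDomain : IsDomain (Zp p) :=
  IsLocalization.isDomain_of_local_atPrime (zpSpanPrime p)

instance zp_dvr : IsDiscreteValuationRing (Zp p) :=
  IsLocalization.AtPrime.isDiscreteValuationRing_of_dedekind_domain ℤ
    (by
      rw [Ne, Ideal.span_singleton_eq_bot]
      exact (Fact.out : Prime p).ne_zero) _

theorem zp_pi_eq : (algebraMap ℤ (Zp p)) p = (p : Zp p) := map_intCast _ p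

theorem zp_pi_ne_zero : (p : Zp p) ≠ 0 := by
  rw [← zp_pi_eq]
  rw [map_ne_zero_iff (algebraMap ℤ (Zp p))
    (IsLocalization.injective (Zp p) (Ideal.span {p} : Ideal ℤ).primeCompl_le_nonZeroDivisors)]
  exact (Fact.out : Prime p).ne_zero

theorem zp_max_eq : IsLocalRing.maximalIdeal (Zp p) = Ideal.span {(p : Zp p)} := by
  rw [← Localization.AtPrime.map_eq_maximalIdeal, Ideal.map_span, Set.image_singleton, zp_pi_eq]

theorem zp_irr : Irreducible (p : Zp p) :=
  IsDiscreteValuationRing.irreducible_of_span_eq_maximalIdeal _ (zp_pi_ne_zero p) (zp_max_eq p)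

theorem zp_not_unit : ¬IsUnit (p : Zp p) := (zp_irr p).not_isUnit

theorem zp_unit_of_not_mem {a : Zp p} (h : a ∉ Ideal.span {(p : Zp p)}) : IsUnit a := by
  rw [← zp_max_eq] at h
  exact IsLocalRing.notMem_maximalIdeal.mp h

theorem zp_decomp {a : Zp p} (ha : a ≠ 0) :
    ∃ (s : ℕ) (w : (Zp p)ˣ), a = (w : Zp p) * (p : Zp p) ^ s :=
  IsDiscreteValuationRing.eq_unit_mul_pow_irreducible ha (zp_irr p)

theorem zp_pow_dvd_iff {m n : ℕ} : (p : Zp p) ^ m ∣ (p : Zp p) ^ n ↔ m ≤ n :=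
  pow_dvd_pow_iff (zp_pi_ne_zero p) (zp_not_unit p)

theorem zp_pow_dvd_unit_mul_pow (w : (Zp p)ˣ) {m n : ℕ} :
    (p : Zp p) ^ m ∣ (w : Zp p) * (p : Zp p) ^ n ↔ m ≤ n := by
  constructor
  · intro h
    rw [← zp_pow_dvd_iff p]
    have : (p : Zp p) ^ m ∣ ((w⁻¹ : (Zp p)ˣ) : Zp p) * ((w : Zp p) * (p : Zp p) ^ n) :=
      Dvd.dvd.mul_left h _
    rwa [← mul_assoc, Units.inv_mul, one_mul] at this
  · intro h
    exact Dvd.dvd.mul_left (pow_dvd_pow _ h) _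

theorem zp_not_pow_succ_dvd (w : (Zp p)ˣ) (n : ℕ) :
    ¬ ((p : Zp p) ^ (n + 1) ∣ (w : Zp p) * (p : Zp p) ^ n) := by
  rw [zp_pow_dvd_unit_mul_pow]
  omega

theorem zp_span_isMaximal : (Ideal.span {(p : Zp p)}).IsMaximal := by
  rw [← zp_max_eq]
  exact IsLocalRing.maximalIdeal.isMaximal _

end ZpSec

section Main
variable (p : ℤ) [Fact (Prime p)] {G : Type u} [AddCommGroup G] [Module (Zp p) G]

theorem ulmSeqOf_finset_sum {B : Set G} (hB : IsDecompWrt (p : Zp p) B)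
    (S : Finset G) (hS : ↑S ⊆ B) (c : G → Zp p) (i : ℕ) :
    UlmSeqOf (p : Zp p) (∑ x ∈ S, c x • x) i
      = S.inf fun x => UlmSeqOf (p : Zp p) (c x • x) i := by
  have h := hB.2.2 S hS (fun b => (p : Zp p) ^ i * c b)
  have e1 : ((p : Zp p) ^ i) • (∑ x ∈ S, c x • x) = ∑ x ∈ S, ((p : Zp p) ^ i * c x) • x := by
    rw [Finset.smul_sum]
    exact Finset.sum_congr rfl fun b _ => by rw [smul_smul]
  show pheight (p : Zp p) (((p : Zp p) ^ i) • _) = _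
  rw [e1, h]
  exact Finset.inf_congr rfl fun b _ => by
    show pheight (p : Zp p) _ = pheight (p : Zp p) _
    rw [mul_smul]

theorem ulmSeqOf_finset_sum_le {B : Set G} (hB : IsDecompWrt (p : Zp p) B)
    (S : Finset G) (hS : ↑S ⊆ B) (c : G → Zp p) (i : ℕ) {x₀ : G} (hx₀ : x₀ ∈ S) :
    UlmSeqOf (p : Zp p) (∑ x ∈ S, c x • x) i ≤ UlmSeqOf (p : Zp p) (c x₀ • x₀) i := by
  rw [ulmSeqOf_finset_sum p hB S hS c i]
  exact Finset.inf_le hx₀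

theorem indep_finset_sum_eq_zero {B : Set G}
    (hB : LinearIndependent (Zp p) (fun x : B => (x : G)))
    (S : Finset G) (hS : ↑S ⊆ B) (d : G → Zp p) (h : ∑ x ∈ S, d x • x = 0) :
    ∀ x ∈ S, d x = 0 := by
  classical
  set l : G →₀ Zp p := Finsupp.onFinset S (fun z => if z ∈ S then d z else 0)
    (fun z hz => by by_contra hmem; simp [hmem] at hz) with hl
  have happ : ∀ z, l z = if z ∈ S then d z else 0 := fun z => rfl
  have hsupp : ↑l.support ⊆ B := by
    intro z hz
    have := Finsupp.mem_support_iff.mp hz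
    rw [happ] at this
    by_cases hzS : z ∈ S
    · exact hS hzS
    · simp [hzS] at this
  have hsum : (l.sum fun b r => r • b) = ∑ x ∈ S, d x • x := by
    rw [Finsupp.sum]
    rw [Finset.sum_subset (Finsupp.support_onFinset_subset)]
    · exact Finset.sum_congr rfl fun z hz => by rw [happ, if_pos hz]
    · intro z _ hz
      rw [Finsupp.notMem_support_iff.mp hz, zero_smul]
  have hzero := finsupp_eq_zero_of_indep hB l hsupp (by rw [hsum]; exact h)
  intro x hx
  have := congrArg (fun (m : G →₀ Zp p) => m x) hzero
  simpa [happ x, if_pos hx] using this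

theorem indep_coords {B : Set G}
    (hB : LinearIndependent (Zp p) (fun x : B => (x : G)))
    (S T : Finset G) (hS : ↑S ⊆ B) (hT : ↑T ⊆ B) (cS cT : G → Zp p)
    (h : ∑ x ∈ S, cS x • x = ∑ x ∈ T, cT x • x) {x₀ : G} (hx₀S : x₀ ∈ S) (hx₀T : x₀ ∈ T) :
    cS x₀ = cT x₀ := by
  classical
  set U := S ∪ T with hU
  have hUB : ↑U ⊆ B := by
    rw [hU]; push_cast [Finset.coe_union]
    exact Set.union_subset hS hT
  set d : G → Zp p := fun z => (if z ∈ S then cS z else 0) - (if z ∈ T then cT z else 0) with hd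
  have hsum : ∑ x ∈ U, d x • x = 0 := by
    have e1 : ∑ x ∈ U, (if x ∈ S then cS x else 0) • x = ∑ x ∈ S, cS x • x := by
      rw [← Finset.sum_subset (Finset.subset_union_left (s₂ := T))]
      · exact Finset.sum_congr rfl fun z hz => by rw [if_pos hz]
      · intro z _ hz
        rw [if_neg hz, zero_smul]
    have e2 : ∑ x ∈ U, (if x ∈ T then cT x else 0) • x = ∑ x ∈ T, cT x • x := by
      rw [← Finset.sum_subset (Finset.subset_union_right (s₁ := S))]
      · exact Finset.sum_congr rfl fun z hz => by rw [if_pos hz]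
      · intro z _ hz
        rw [if_neg hz, zero_smul]
    simp only [hd, sub_smul, Finset.sum_sub_distrib, e1, e2, h, sub_self]
  have := indep_finset_sum_eq_zero p hB U hUB d hsum x₀ (Finset.mem_union_left _ hx₀S)
  rw [hd] at this
  simp only [if_pos hx₀S, if_pos hx₀T] at this
  exact sub_eq_zero.mp this

theorem linearIndependent_smul_pow {ι : Type*} (v : ι → G)
    (hv : LinearIndependent (Zp p) v) (k : ι → ℕ) :
    LinearIndependent (Zp p) (fun i => ((p : Zp p) ^ (k i)) • v i) := by
  rw [linearIndependent_iff'] at hv ⊢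
  intro t g hsum i hi
  have h2 : ∑ j ∈ t, (g j * (p : Zp p) ^ (k j)) • v j = 0 := by
    rw [← hsum]
    exact Finset.sum_congr rfl fun j _ => by rw [mul_smul]
  have := hv t _ h2 i hi
  rcases mul_eq_zero.mp this with h | h
  · exact h
  · exact absurd h (pow_ne_zero _ (zp_pi_ne_zero p))

theorem hull_rep {Y : Set G} {x : G} (hx : x ∈ hull (Submodule.span (Zp p) Y)) :
    ∃ (k : ℕ) (f : G →₀ Zp p), ↑f.support ⊆ Y ∧
      ((p : Zp p) ^ k) • x = f.sum fun b r => r • b := by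
  obtain ⟨a, ha, hax⟩ := hx
  obtain ⟨k, w, rfl⟩ := zp_decomp p ha
  have hmem : ((p : Zp p) ^ k) • x ∈ Submodule.span (Zp p) Y := by
    have : ((p : Zp p) ^ k) • x = ((w⁻¹ : (Zp p)ˣ) : Zp p) • (((w : Zp p) * (p : Zp p) ^ k) • x) := by
      rw [smul_smul, ← mul_assoc, Units.inv_mul, one_mul]
    rw [this]
    exact Submodule.smul_mem _ _ hax
  obtain ⟨f, hf, hsum⟩ := Submodule.mem_span_set.mp hmem
  exact ⟨k, f, hf, hsum.symm⟩

theorem arith_of_tail_le {u : ℕ → WithTop Ordinal.{u}} (hu : ∀ i, u i < u (i + 1))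
    {A B N : ℕ} (h : ∀ i, N ≤ i → u (i + A) ≤ u (i + B)) : A ≤ B := by
  by_contra hAB
  have hm : StrictMono u := strictMono_nat_of_lt_succ hu
  exact absurd (h N le_rfl) (not_le.mpr (hm (by omega)))

end Main

section MainKey
variable (p : ℤ) [Fact (Prime p)] {G : Type u} [AddCommGroup G] [Module (Zp p) G]

set_option maxHeartbeats 2000000 in
set_option synthInstance.maxHeartbeats 400000 in
theorem key (C C' : Set (Set G)) (hC : IsPDBWrt (p : Zp p) C) (hC' : IsPDBWrt (p : Zp p) C')
    (e : ℕ → WithTop Ordinal.{u}) (he : IsUlmSeq e) (n : ℕ) (X : Set G) (hX : X ∈ C)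
    (h : HasAtLeast (p : Zp p) e n X) : ∃ Y ∈ C', HasAtLeast (p : Zp p) e n Y := by
  classical
  obtain ⟨s, hsX, hns, hse⟩ := h
  obtain ⟨Y₀, hY₀⟩ := hC'.1
  obtain ⟨Y, hYC', -, hcovY⟩ := absorb hC' hY₀ s
  have hYfin := hC'.2.1 Y hYC'
  have hYcoe : ↑hYfin.toFinset = Y := hYfin.coe_toFinset
  set Yfin := hYfin.toFinset with hYfdef
  have hYdec := hC'.2.2.1 Y hYC'
  have hXdec := hC.2.2.1 X hX
  have hsind : LinearIndependent (Zp p) (fun x : ↥s => (x : G)) := by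
    have h1 : LinearIndependent (Zp p) (fun x : (↑s : Set G) => (x : G)) :=
      LinearIndepOn.mono (v := id) hXdec.1 hsX
    exact h1.comp (fun x : ↥s => (⟨x.1, x.2⟩ : (↑s : Set G)))
      (fun a b hab => Subtype.ext (congrArg Subtype.val hab))
  by_cases htop : ∃ i, e i = ⊤
  · -- TOP case
    obtain ⟨i₀, hi₀⟩ := htop
    have etop : ∀ j, i₀ ≤ j → e j = ⊤ := by
      intro j hj
      induction j, hj using Nat.le_induction with
      | base => exact hi₀
      | succ j hj ih => exact (he j).1 ih
    have hxtop : ∀ x ∈ s, ∃ N, ∀ j, N ≤ j → UlmSeqOf (p : Zp p) x j = ⊤ := by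
      intro x hx
      obtain ⟨m, nn, hmn⟩ := hse x hx
      refine ⟨nn + i₀, fun j hj => ?_⟩
      have h1 := hmn (j - nn)
      rw [show (j - nn) + nn = j from by omega] at h1
      rw [h1]
      exact etop _ (by omega)
    set Et : Finset G :=
      Yfin.filter (fun b => ∃ N, ∀ j, N ≤ j → UlmSeqOf (p : Zp p) b j = ⊤) with hEt
    have hspan : ∀ x ∈ s, ∃ K : ℕ,
        ((p : Zp p) ^ K) • x ∈ Submodule.span (Zp p) (Et : Set G) := by
      intro x hx
      obtain ⟨k, f, hfY, hfsum⟩ := hull_rep p (hcovY x hx)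
      obtain ⟨N, hN⟩ := hxtop x hx
      refine ⟨k, ?_⟩
      rw [hfsum, Finsupp.sum]
      apply Submodule.sum_mem
      intro b hb
      apply Submodule.smul_mem
      apply Submodule.subset_span
      have hbY : b ∈ Y := hfY hb
      obtain ⟨v, w, hw⟩ := zp_decomp p (Finsupp.mem_support_iff.mp hb)
      have hbtop : ∀ j, N + v ≤ j → UlmSeqOf (p : Zp p) b j = ⊤ := by
        intro j hj
        have hsum_top : UlmSeqOf (p : Zp p) (f.sum fun b r => r • b) (j - v) = ⊤ := by
          rw [← hfsum, ulmSeqOf_smul_pow]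
          exact hN _ (by omega)
        rw [ulmSeqOf_finsupp_sum hYdec f hfY] at hsum_top
        have := (Finset.inf_eq_top_iff _ _).mp hsum_top b hb
        rw [hw, ulmSeqOf_smul] at this
        rw [show j = (j - v) + v from by omega]
        exact this
      simp only [hEt, Finset.coe_filter, Set.mem_setOf_eq]
      exact ⟨hYfin.mem_toFinset.mpr hbY, N + v, hbtop⟩
    have hKs := fun (x : ↥s) => hspan x.1 x.2
    choose K hK using hKs
    have hscaled : LinearIndependent (Zp p)
        (fun x : ↥s => ((p : Zp p) ^ (K x)) • (x : G)) :=
      linearIndependent_smul_pow p _ hsind K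
    have hsub : LinearIndependent (Zp p)
        (fun x : ↥s => (⟨((p : Zp p) ^ (K x)) • (x : G), hK x⟩ :
          Submodule.span (Zp p) (Et : Set G))) := by
      apply LinearIndependent.of_comp (Submodule.span (Zp p) (Et : Set G)).subtype
      exact hscaled
    have hcard : s.card ≤ Et.card := by
      have h1 : (s.card : Cardinal) = Cardinal.mk ↥s := by
        rw [Cardinal.mk_fintype, Fintype.card_coe]
      have h2 := hsub.cardinal_le_rank
      have h3 := rank_span_le (R := Zp p) (Et : Set G)
      have h4 : Cardinal.mk (Et : Set G) = Et.card := Cardinal.mk_coe_finset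
      have : (s.card : Cardinal) ≤ (Et.card : Cardinal) := by
        rw [h1, ← h4]
        exact h2.trans h3
      exact_mod_cast this
    refine ⟨Y, hYC', Et, ?_, by omega, ?_⟩
    · intro b hb
      have := Finset.mem_filter.mp hb
      exact hYfin.mem_toFinset.mp this.1
    · intro b hb
      obtain ⟨-, N, hN⟩ := Finset.mem_filter.mp hb
      exact ⟨i₀, N, fun i => by
        rw [hN (i + N) (by omega), etop (i + i₀) (by omega)]⟩
  · -- ORD case
    push_neg at htop
    have hemono : ∀ i, e i < e (i + 1) := fun i => (he i).2 (htop i)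
    -- alignment data for elements of s
    have hsel : ∀ x : G, ∃ m nn : ℕ, x ∈ s →
        ∀ i, UlmSeqOf (p : Zp p) x (i + nn) = e (i + m) := by
      intro x
      by_cases hx : x ∈ s
      · obtain ⟨m, nn, hmn⟩ := hse x hx
        exact ⟨m, nn, fun _ => hmn⟩
      · exact ⟨0, 0, fun hx' => absurd hx' hx⟩
    choose mfun nfun hmn using hsel
    set M : ℕ := s.sup mfun with hM
    set u : ℕ → WithTop Ordinal.{u} := fun j => e (j + M) with hu
    have humono : ∀ i, u i < u (i + 1) := fun i => by
      simpa [hu, show i + M + 1 = (i + 1) + M from by omega] using hemono (i + M)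
    set sfun : G → ℕ := fun x => nfun x + (M - mfun x) with hsfun
    have hxu : ∀ x ∈ s, ∀ j, UlmSeqOf (p : Zp p) x (j + sfun x) = u j := by
      intro x hx j
      have hle : mfun x ≤ M := Finset.le_sup hx
      have h1 := hmn x hx (j + (M - mfun x))
      rw [show j + (M - mfun x) + nfun x = j + sfun x from by simp [hsfun]; omega] at h1
      rw [show j + (M - mfun x) + mfun x = j + M from by omega] at h1
      exact h1
    set E : Finset G := Yfin.filter (fun b => UlmEquiv (UlmSeqOf (p : Zp p) b) u) with hE
    by_cases hcard : n ≤ E.card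
    · refine ⟨Y, hYC', E, ?_, hcard, ?_⟩
      · intro b hb
        exact hYfin.mem_toFinset.mp (Finset.mem_filter.mp hb).1
      · intro b hb
        have h1 := (Finset.mem_filter.mp hb).2
        exact ulmEquiv_trans h1 ⟨M, 0, fun i => rfl⟩
    · exfalso
      push_neg at hcard
      -- alignment data for elements of E
      have hbsel : ∀ b : G, ∃ a c : ℕ, b ∈ E →
          ∀ i, UlmSeqOf (p : Zp p) b (i + a) = u (i + c) := by
        intro b
        by_cases hb : b ∈ E
        · obtain ⟨c, a, hac⟩ := (Finset.mem_filter.mp hb).2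
          exact ⟨a, c, fun _ => hac⟩
        · exact ⟨0, 0, fun hb' => absurd hb' hb⟩
      choose afun cfun hac using hbsel
      -- representations of elements of s over Y
      have hxsel : ∀ x : G, ∃ (k : ℕ) (f : G →₀ Zp p), x ∈ s →
          (↑f.support ⊆ Y ∧ ((p : Zp p) ^ k) • x = f.sum fun b r => r • b) := by
        intro x
        by_cases hx : x ∈ s
        · obtain ⟨k, f, h1, h2⟩ := hull_rep p (hcovY x hx)
          exact ⟨k, f, fun _ => ⟨h1, h2⟩⟩
        · exact ⟨0, 0, fun hx' => absurd hx' hx⟩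
      choose kfun ffun hkf using hxsel
      set K : ℕ := s.sup kfun with hK
      -- matrix divisibility
      have hdvd : ∀ x ∈ s, ∀ b ∈ E, ((p : Zp p)) ^ (afun b + kfun x) ∣
          ((p : Zp p)) ^ (cfun b + sfun x) * (ffun x) b := by
        intro x hx b hb
        by_cases hfb : (ffun x) b = 0
        · rw [hfb, mul_zero]
          exact dvd_zero _
        · obtain ⟨v, w, hw⟩ := zp_decomp p hfb
          have hle : afun b + kfun x ≤ cfun b + sfun x + v := by
            apply arith_of_tail_le humono (N := 0)
            intro j _
            have hD2 := ulmSeqOf_sum_le_term hYdec (ffun x) (hkf x hx).1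
              (j + afun b + sfun x) (Finsupp.mem_support_iff.mpr hfb)
            rw [← (hkf x hx).2, ulmSeqOf_smul_pow] at hD2
            rw [hw, ulmSeqOf_smul] at hD2
            have eL : UlmSeqOf (p : Zp p) x (j + afun b + sfun x + kfun x)
                = u (j + (afun b + kfun x)) := by
              rw [show j + afun b + sfun x + kfun x = (j + (afun b + kfun x)) + sfun x
                from by omega]
              exact hxu x hx _
            have eR : UlmSeqOf (p : Zp p) b (j + afun b + sfun x + v)
                = u (j + (cfun b + sfun x + v)) := by
              rw [show j + afun b + sfun x + v = (j + sfun x + v) + afun b from by omega]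
              rw [hac b hb]
              congr 1
              omega
            rw [eL, eR] at hD2
            exact hD2
          calc ((p : Zp p)) ^ (afun b + kfun x) ∣ ((p : Zp p)) ^ (cfun b + sfun x + v) :=
                pow_dvd_pow _ hle
            _ = ((p : Zp p)) ^ (cfun b + sfun x) * ((p : Zp p)) ^ v := by rw [pow_add]
            _ ∣ ((p : Zp p)) ^ (cfun b + sfun x) * ((w : Zp p) * (p : Zp p) ^ v) := by
                exact ⟨(w : Zp p), by ring⟩
            _ = ((p : Zp p)) ^ (cfun b + sfun x) * (ffun x) b := by rw [← hw]
      have htsel : ∀ x : G, ∀ b : G, ∃ t : Zp p, x ∈ s → b ∈ E →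
          ((p : Zp p)) ^ (cfun b + sfun x) * (ffun x) b
            = ((p : Zp p)) ^ (afun b + kfun x) * t := by
        intro x b
        by_cases hx : x ∈ s
        · by_cases hb : b ∈ E
          · obtain ⟨t, ht⟩ := hdvd x hx b hb
            exact ⟨t, fun _ _ => ht⟩
          · exact ⟨0, fun _ hb' => absurd hb' hb⟩
        · exact ⟨0, fun hx' _ => absurd hx' hx⟩
      choose tfun htfun using htsel
      -- residue field linear algebra
      haveI := zp_span_isMaximal p
      letI : Field (Zp p ⧸ Ideal.span {(p : Zp p)}) := Ideal.Quotient.field _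
      set mkq : Zp p → Zp p ⧸ Ideal.span {(p : Zp p)} :=
        fun r => Ideal.Quotient.mk (Ideal.span {(p : Zp p)}) r with hmkq
      set V : ↥s → (↥E → Zp p ⧸ Ideal.span {(p : Zp p)}) :=
        fun x b => mkq (tfun x.1 b.1) with hV
      have hnli : ¬ LinearIndependent (Zp p ⧸ Ideal.span {(p : Zp p)}) V := by
        intro hli
        have h1 := hli.fintype_card_le_finrank
        rw [Module.finrank_pi] at h1
        rw [Fintype.card_coe, Fintype.card_coe] at h1
        omega
      obtain ⟨g, hgsum, x₀, hgx₀⟩ := Fintype.not_linearIndependent_iff.mp hnli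
      -- lift coefficients
      have hglift : ∀ z : G, ∃ cz : Zp p, ∀ hz : z ∈ s,
          mkq cz = g ⟨z, hz⟩ ∧ (g ⟨z, hz⟩ = 0 → cz = 0) := by
        intro z
        by_cases hz : z ∈ s
        · by_cases h0 : g ⟨z, hz⟩ = 0
          · refine ⟨0, fun hz' => ?_⟩
            constructor
            · rw [show (⟨z, hz'⟩ : ↥s) = ⟨z, hz⟩ from rfl, h0]
              exact map_zero (Ideal.Quotient.mk _)
            · intro _; rfl
          · obtain ⟨cz, hcz⟩ := Ideal.Quotient.mk_surjective (g ⟨z, hz⟩)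
            refine ⟨cz, fun hz' => ⟨hcz, fun h => absurd h h0⟩⟩
        · exact ⟨0, fun hz' => absurd hz' hz⟩
      choose cG hcG using hglift
      have hcGunit : ∀ z, z ∈ s → cG z ≠ 0 → IsUnit (cG z) := by
        intro z hz hne
        apply zp_unit_of_not_mem p
        intro hmem
        have h1 : mkq (cG z) = 0 := Ideal.Quotient.eq_zero_iff_mem.mpr hmem
        exact hne ((hcG z hz).2 (((hcG z hz).1).symm.trans h1))
      have hccx₀ : cG x₀.1 ≠ 0 := by
        intro h0
        apply hgx₀
        have h2 := (hcG x₀.1 x₀.2).1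
        rw [h0] at h2
        rw [show (⟨x₀.1, x₀.2⟩ : ↥s) = x₀ from rfl] at h2
        rw [← h2]
        exact (map_zero (Ideal.Quotient.mk (Ideal.span {(p : Zp p)}))).symm
      obtain ⟨w₀, hw₀⟩ := hcGunit x₀.1 x₀.2 hccx₀
      set cc : G → Zp p := fun z => cG z * (p : Zp p) ^ (sfun z + K) with hcc
      set y : G := ∑ x ∈ s, cc x • x with hy
      set β : G → Zp p :=
        fun b => ∑ x ∈ s, cG x * (p : Zp p) ^ (sfun x + (K - kfun x)) * (ffun x) b with hβ
      have hyY : y = ∑ b ∈ Yfin, β b • b := by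
        rw [hy]
        have step : ∀ x ∈ s, cc x • x
            = ∑ b ∈ Yfin, (cG x * (p : Zp p) ^ (sfun x + (K - kfun x)) * (ffun x) b) • b := by
          intro x hx
          obtain ⟨hsupp, hsum⟩ := hkf x hx
          have hkle : kfun x ≤ K := Finset.le_sup hx
          have e1 : cc x • x
              = (cG x * (p : Zp p) ^ (sfun x + (K - kfun x))) • (((p : Zp p)) ^ (kfun x) • x) := by
            have e3 : sfun x + (K - kfun x) + kfun x = sfun x + K := by omega
            rw [smul_smul, hcc]
            simp only []
            rw [mul_assoc, ← pow_add, e3]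
          rw [e1, hsum, Finsupp.sum, Finset.smul_sum]
          simp only [smul_smul]
          exact Finset.sum_subset
            (fun b hb => hYfin.mem_toFinset.mpr (hsupp hb))
            (fun b _ hb => by rw [Finsupp.notMem_support_iff.mp hb, mul_zero, zero_smul])
        rw [Finset.sum_congr rfl step, Finset.sum_comm]
        exact Finset.sum_congr rfl fun b _ => (Finset.sum_smul).symm
      have hyU : ∀ j, UlmSeqOf (p : Zp p) y j = u (j + K) := by
        intro j
        rw [hy, ulmSeqOf_finset_sum p hXdec s hsX cc j]
        have hterm : ∀ z, z ∈ s → cG z ≠ 0 →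
            UlmSeqOf (p : Zp p) (cc z • z) j = u (j + K) := by
          intro z hz h0
          obtain ⟨w, hw⟩ := hcGunit z hz h0
          have e1 : cc z = (w : Zp p) * (p : Zp p) ^ (sfun z + K) := by rw [hcc]; simp only []; rw [hw]
          rw [e1, ulmSeqOf_smul]
          rw [show j + (sfun z + K) = (j + K) + sfun z from by omega]
          exact hxu z hz _
        apply le_antisymm
        · exact le_of_le_of_eq (Finset.inf_le x₀.2) (hterm x₀.1 x₀.2 hccx₀)
        · apply Finset.le_inf
          intro z hz
          by_cases h0 : cG z = 0
          · have e0 : cc z = 0 := by rw [hcc]; simp only []; rw [h0, zero_mul]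
            rw [e0, ulmSeqOf_zero_smul]
            exact le_top
          · exact le_of_eq (hterm z hz h0).symm
      have hlow : ∀ b ∈ Yfin, ∀ j, u (j + K) ≤ UlmSeqOf (p : Zp p) (β b • b) j := by
        intro b hb j
        have h1 := ulmSeqOf_finset_sum p hYdec Yfin (by rw [hYcoe]) β j
        rw [← hyY, hyU j] at h1
        exact le_of_eq_of_le h1 (Finset.inf_le hb)
      obtain ⟨B, hBC, hXB, hcovB⟩ := absorb hC hX Yfin
      have hBdec := hC.2.2.1 B hBC
      have hBfin := hC.2.1 B hBC
      have hsB : ↑s ⊆ B := fun z hz => hXB (hsX hz)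
      have hbrep : ∀ b : G, ∃ (q : ℕ) (F : G →₀ Zp p), b ∈ Yfin →
          (↑F.support ⊆ B ∧ ((p : Zp p)) ^ q • b = F.sum fun z r => r • z) := by
        intro b
        by_cases hb : b ∈ Yfin
        · obtain ⟨q, F, h1, h2⟩ := hull_rep p (hcovB b hb)
          exact ⟨q, F, fun _ => ⟨h1, h2⟩⟩
        · exact ⟨0, 0, fun hb' => absurd hb' hb⟩
      choose qfun Ffun hqF using hbrep
      set Q : ℕ := Yfin.sum qfun with hQ
      have hqQ : ∀ b ∈ Yfin, qfun b ≤ Q :=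
        fun b hb => Finset.single_le_sum (fun _ _ => Nat.zero_le _) hb
      set Bfin := hBfin.toFinset with hBfdef
      have hBcoe : ↑Bfin = B := hBfin.coe_toFinset
      have hrep1 : ((p : Zp p)) ^ Q • y = ∑ x ∈ s, (cc x * (p : Zp p) ^ Q) • x := by
        rw [hy, Finset.smul_sum]
        exact Finset.sum_congr rfl fun x _ => by rw [smul_smul, mul_comm]
      have hrep2 : ((p : Zp p)) ^ Q • y
          = ∑ z ∈ Bfin, (∑ b ∈ Yfin, (p : Zp p) ^ (Q - qfun b) * β b * (Ffun b) z) • z := by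
        rw [hyY, Finset.smul_sum]
        have step : ∀ b ∈ Yfin, (p : Zp p) ^ Q • (β b • b)
            = ∑ z ∈ Bfin, ((p : Zp p) ^ (Q - qfun b) * β b * (Ffun b) z) • z := by
          intro b hb
          obtain ⟨hsupp, hsum⟩ := hqF b hb
          have e2 : (Q - qfun b) + qfun b = Q := by
            have := hqQ b hb
            omega
          have e1 : (p : Zp p) ^ Q • (β b • b)
              = ((p : Zp p) ^ (Q - qfun b) * β b) • (((p : Zp p)) ^ (qfun b) • b) := by
            rw [smul_smul, smul_smul]
            congr 1
            rw [mul_right_comm, ← pow_add, e2]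
          rw [e1, hsum, Finsupp.sum, Finset.smul_sum]
          simp only [smul_smul]
          exact Finset.sum_subset
            (fun z hz => hBfin.mem_toFinset.mpr (hsupp hz))
            (fun z _ hz => by rw [Finsupp.notMem_support_iff.mp hz, mul_zero, zero_smul])
        rw [Finset.sum_congr rfl step, Finset.sum_comm]
        exact Finset.sum_congr rfl fun z _ => (Finset.sum_smul).symm
      have hEQ : cc x₀.1 * (p : Zp p) ^ Q
          = ∑ b ∈ Yfin, (p : Zp p) ^ (Q - qfun b) * β b * (Ffun b) x₀.1 :=
        indep_coords p hBdec.1 s Bfin hsB (by rw [hBcoe]) _ _ (hrep1.symm.trans hrep2) x₀.2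
          (hBfin.mem_toFinset.mpr (hXB (hsX x₀.2)))
      have hmain : ∀ b ∈ Yfin, ((p : Zp p)) ^ (sfun x₀.1 + K + qfun b + 1) ∣
          β b * (Ffun b) x₀.1 := by
        intro b hb
        obtain ⟨hFsupp, hFsum⟩ := hqF b hb
        by_cases hF0 : (Ffun b) x₀.1 = 0
        · rw [hF0, mul_zero]; exact dvd_zero _
        obtain ⟨vF, wF, hwF⟩ := zp_decomp p hF0
        have hD2 : ∀ i, UlmSeqOf (p : Zp p) b (i + qfun b)
            ≤ UlmSeqOf (p : Zp p) x₀.1 (i + vF) := by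
          intro i
          have h1 := ulmSeqOf_sum_le_term hBdec (Ffun b) hFsupp i
            (Finsupp.mem_support_iff.mpr hF0)
          rw [← hFsum, ulmSeqOf_smul_pow] at h1
          rw [hwF, ulmSeqOf_smul] at h1
          exact h1
        by_cases hbE : b ∈ E
        · -- kernel case
          have hS1 : ∃ r : Zp p, (∑ x ∈ s, cG x * tfun x b) = (p : Zp p) * r := by
            have hmk : mkq (∑ x ∈ s, cG x * tfun x b) = 0 := by
              have e1 : mkq (∑ x ∈ s, cG x * tfun x b)
                  = ∑ x ∈ s, mkq (cG x) * mkq (tfun x b) := by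
                rw [hmkq]
                simp only [map_sum, map_mul]
              rw [e1]
              have e2 : ∑ x ∈ s, mkq (cG x) * mkq (tfun x b)
                  = ∑ x : ↥s, mkq (cG x.1) * mkq (tfun x.1 b) :=
                (Finset.sum_coe_sort s _).symm
              rw [e2]
              have e3 : ∀ x : ↥s, mkq (cG x.1) * mkq (tfun x.1 b) = g x • V x ⟨b, hbE⟩ := by
                intro x
                rw [(hcG x.1 x.2).1]
                rw [show (⟨x.1, x.2⟩ : ↥s) = x from rfl]
                rfl
              rw [Finset.sum_congr rfl fun x _ => e3 x]
              have e4 := congrFun hgsum ⟨b, hbE⟩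
              simpa using e4
            have hmem := Ideal.Quotient.eq_zero_iff_mem.mp hmk
            obtain ⟨r, hr⟩ := Ideal.mem_span_singleton'.mp hmem
            exact ⟨r, by rw [← hr, mul_comm]⟩
          obtain ⟨r, hr⟩ := hS1
          have hKcond : (p : Zp p) ^ (cfun b) * β b
              = (p : Zp p) ^ (K + afun b + 1) * r := by
            rw [hβ]
            simp only []
            rw [Finset.mul_sum]
            have e5 : ∀ x ∈ s, (p : Zp p) ^ (cfun b)
                  * (cG x * (p : Zp p) ^ (sfun x + (K - kfun x)) * (ffun x) b)
                = cG x * (p : Zp p) ^ (K + afun b) * tfun x b := by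
              intro x hx
              have hkle : kfun x ≤ K := Finset.le_sup hx
              have e6 := htfun x b hx hbE
              calc (p : Zp p) ^ (cfun b)
                    * (cG x * (p : Zp p) ^ (sfun x + (K - kfun x)) * (ffun x) b)
                  = cG x * (p : Zp p) ^ (K - kfun x)
                    * ((p : Zp p) ^ (cfun b + sfun x) * (ffun x) b) := by
                    rw [pow_add, pow_add]; ring
                _ = cG x * (p : Zp p) ^ (K - kfun x)
                    * ((p : Zp p) ^ (afun b + kfun x) * tfun x b) := by rw [e6]
                _ = cG x * (p : Zp p) ^ (K + afun b) * tfun x b := by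
                    rw [show K + afun b = (K - kfun x) + (afun b + kfun x) from by omega,
                      pow_add]
                    ring
            rw [Finset.sum_congr rfl e5]
            have e7 : ∀ x ∈ s, cG x * (p : Zp p) ^ (K + afun b) * tfun x b
                = (p : Zp p) ^ (K + afun b) * (cG x * tfun x b) := fun x _ => by ring
            rw [Finset.sum_congr rfl e7, ← Finset.mul_sum, hr]
            rw [pow_add (p : Zp p) (K + afun b) 1, pow_one]
            ring
          -- F-bound
          have hFle : sfun x₀.1 + qfun b + cfun b ≤ afun b + vF := by
            apply arith_of_tail_le humono (N := 0)
            intro i _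
            have h1 := hD2 (i + afun b + sfun x₀.1)
            have eL : UlmSeqOf (p : Zp p) b (i + afun b + sfun x₀.1 + qfun b)
                = u (i + (sfun x₀.1 + qfun b + cfun b)) := by
              rw [show i + afun b + sfun x₀.1 + qfun b
                  = (i + sfun x₀.1 + qfun b) + afun b from by omega, hac b hbE]
              congr 1
              omega
            have eR : UlmSeqOf (p : Zp p) x₀.1 (i + afun b + sfun x₀.1 + vF)
                = u (i + (afun b + vF)) := by
              rw [show i + afun b + sfun x₀.1 + vF
                  = (i + (afun b + vF)) + sfun x₀.1 from by omega]
              exact hxu x₀.1 x₀.2 _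
            rw [show i + afun b + sfun x₀.1 + qfun b
                = (i + afun b + sfun x₀.1) + qfun b from by omega] at eL
            rw [show i + afun b + sfun x₀.1 + vF
                = (i + afun b + sfun x₀.1) + vF from by omega] at eR
            rw [eL, eR] at h1
            exact h1
          have hFdvd : ∃ t3 : Zp p, (p : Zp p) ^ (afun b) * (Ffun b) x₀.1
              = (p : Zp p) ^ (qfun b + cfun b + sfun x₀.1) * t3 := by
            have : (p : Zp p) ^ (qfun b + cfun b + sfun x₀.1) ∣
                (p : Zp p) ^ (afun b) * (Ffun b) x₀.1 := by
              rw [hwF, show (p : Zp p) ^ afun b * ((wF : Zp p) * (p : Zp p) ^ vF)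
                  = (wF : Zp p) * (p : Zp p) ^ (afun b + vF) from by rw [pow_add]; ring]
              rw [zp_pow_dvd_unit_mul_pow]
              omega
            obtain ⟨t3, ht3⟩ := this
            exact ⟨t3, ht3⟩
          obtain ⟨t3, ht3⟩ := hFdvd
          refine ⟨r * t3, ?_⟩
          have hcancel : (p : Zp p) ^ (cfun b + afun b) * (β b * (Ffun b) x₀.1)
              = (p : Zp p) ^ (cfun b + afun b)
                * ((p : Zp p) ^ (sfun x₀.1 + K + qfun b + 1) * (r * t3)) := by
            calc (p : Zp p) ^ (cfun b + afun b) * (β b * (Ffun b) x₀.1)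
                = ((p : Zp p) ^ (cfun b) * β b)
                  * ((p : Zp p) ^ (afun b) * (Ffun b) x₀.1) := by
                  rw [pow_add]; ring
              _ = ((p : Zp p) ^ (K + afun b + 1) * r)
                  * ((p : Zp p) ^ (qfun b + cfun b + sfun x₀.1) * t3) := by
                  rw [hKcond, ht3]
              _ = (p : Zp p) ^ ((K + afun b + 1) + (qfun b + cfun b + sfun x₀.1))
                  * (r * t3) := by
                  rw [mul_mul_mul_comm, ← pow_add]
              _ = (p : Zp p) ^ ((cfun b + afun b) + (sfun x₀.1 + K + qfun b + 1))
                  * (r * t3) := by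
                  congr 2
                  omega
              _ = (p : Zp p) ^ (cfun b + afun b)
                  * ((p : Zp p) ^ (sfun x₀.1 + K + qfun b + 1) * (r * t3)) := by
                  rw [pow_add, mul_assoc]
          exact mul_left_cancel₀ (pow_ne_zero _ (zp_pi_ne_zero p)) hcancel
        · -- non-E case
          by_cases hβ0 : β b = 0
          · rw [hβ0, zero_mul]; exact dvd_zero _
          obtain ⟨vβ, wβ, hwβ⟩ := zp_decomp p hβ0
          have hLB : ∀ j, u (j + K) ≤ UlmSeqOf (p : Zp p) b (j + vβ) := by
            intro j
            have h1 := hlow b hb j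
            rw [hwβ, ulmSeqOf_smul] at h1
            exact h1
          have hx₀eval : ∀ j, UlmSeqOf (p : Zp p) x₀.1 (j + sfun x₀.1) = u j :=
            hxu x₀.1 x₀.2
          have hle : sfun x₀.1 + qfun b + K ≤ vβ + vF := by
            apply arith_of_tail_le humono (N := 0)
            intro t _
            have h1 := hLB (t + sfun x₀.1 + qfun b)
            have h2 := hD2 (t + sfun x₀.1 + vβ)
            have h3 : UlmSeqOf (p : Zp p) x₀.1 (t + sfun x₀.1 + vβ + vF)
                = u (t + (vβ + vF)) := by
              rw [show t + sfun x₀.1 + vβ + vF = (t + (vβ + vF)) + sfun x₀.1 from by omega]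
              exact hx₀eval _
            rw [show t + sfun x₀.1 + vβ + vF = (t + sfun x₀.1 + vβ) + vF from by omega] at h3
            rw [h3] at h2
            rw [show t + sfun x₀.1 + qfun b + vβ = (t + sfun x₀.1 + vβ) + qfun b
              from by omega] at h1
            rw [show t + sfun x₀.1 + qfun b + K = t + (sfun x₀.1 + qfun b + K)
              from by omega] at h1
            exact h1.trans h2
          have hlt : sfun x₀.1 + qfun b + K + 1 ≤ vβ + vF := by
            rcases lt_or_eq_of_le hle with hlt' | heq
            · omega
            · exfalso
              apply hbE
              apply Finset.mem_filter.mpr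
              refine ⟨hb, sfun x₀.1 + qfun b + K, sfun x₀.1 + qfun b + vβ, fun τ => ?_⟩
              apply le_antisymm
              · have h2 := hD2 (τ + sfun x₀.1 + vβ)
                have h3 : UlmSeqOf (p : Zp p) x₀.1 (τ + sfun x₀.1 + vβ + vF)
                    = u (τ + (sfun x₀.1 + qfun b + K)) := by
                  rw [show τ + sfun x₀.1 + vβ + vF = (τ + (vβ + vF)) + sfun x₀.1
                    from by omega]
                  rw [hx₀eval]
                  congr 1
                  omega
                rw [show τ + sfun x₀.1 + vβ + vF = (τ + sfun x₀.1 + vβ) + vF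
                  from by omega] at h3
                rw [h3] at h2
                rw [show (τ + sfun x₀.1 + vβ) + qfun b
                  = τ + (sfun x₀.1 + qfun b + vβ) from by omega] at h2
                exact h2
              · have h1 := hLB (τ + sfun x₀.1 + qfun b)
                rw [show τ + sfun x₀.1 + qfun b + K = τ + (sfun x₀.1 + qfun b + K)
                  from by omega] at h1
                rw [show τ + sfun x₀.1 + qfun b + vβ = τ + (sfun x₀.1 + qfun b + vβ)
                  from by omega] at h1
                exact h1
          rw [hwβ, hwF]
          rw [show (wβ : Zp p) * (p : Zp p) ^ vβ * ((wF : Zp p) * (p : Zp p) ^ vF)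
              = ((wβ * wF : (Zp p)ˣ) : Zp p) * (p : Zp p) ^ (vβ + vF) from by
            rw [Units.val_mul, pow_add]; ring]
          rw [zp_pow_dvd_unit_mul_pow]
          omega
      have hdiv : ∀ b ∈ Yfin, ((p : Zp p)) ^ (sfun x₀.1 + K + Q + 1) ∣
          (p : Zp p) ^ (Q - qfun b) * β b * (Ffun b) x₀.1 := by
        intro b hb
        obtain ⟨t2, ht2⟩ := hmain b hb
        refine ⟨t2, ?_⟩
        rw [mul_assoc, ht2, ← mul_assoc, ← pow_add]
        congr 2
        have := hqQ b hb
        omega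
      have hfinal : ((p : Zp p)) ^ (sfun x₀.1 + K + Q + 1) ∣ cc x₀.1 * (p : Zp p) ^ Q := by
        rw [hEQ]
        exact Finset.dvd_sum hdiv
      have hform : cc x₀.1 * (p : Zp p) ^ Q
          = (w₀ : Zp p) * (p : Zp p) ^ (sfun x₀.1 + K + Q) := by
        rw [hcc]
        simp only []
        rw [← hw₀, mul_assoc, ← pow_add]
      rw [hform] at hfinal
      exact zp_not_pow_succ_dvd p w₀ _ hfinal

end MainKey

theorem statement_4 (p : ℤ) [Fact (Prime p)] {G : Type u} [AddCommGroup G]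
    [Module (Zp p) G]
    (C C' : Set (Set G)) (hC : IsPDBWrt (p : Zp p) C) (hC' : IsPDBWrt (p : Zp p) C')
    (e : ℕ → WithTop Ordinal.{u}) (he : IsUlmSeq e) :
    wHat (p : Zp p) C e = wHat (p : Zp p) C' e := by
  have hsets : {N : ℕ∞ | ∃ n : ℕ, N = (n : ℕ∞) ∧ ∃ X ∈ C, HasAtLeast (p : Zp p) e n X}
      = {N : ℕ∞ | ∃ n : ℕ, N = (n : ℕ∞) ∧ ∃ X ∈ C', HasAtLeast (p : Zp p) e n X} := by
    ext N
    constructor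
    · rintro ⟨n, rfl, X, hX, h⟩
      obtain ⟨Y, hY, hh⟩ := key p C C' hC hC' e he n X hX h
      exact ⟨n, rfl, Y, hY, hh⟩
    · rintro ⟨n, rfl, X, hX, h⟩
      obtain ⟨Y, hY, hh⟩ := key p C' C hC' hC e he n X hX h
      exact ⟨n, rfl, Y, hY, hh⟩
  unfold wHat
  rw [hsets]

end
end

section
/- Let G be a module over Z_p (the integers localized at a prime p) with a partial decomposition basis C, and let Y ⊆ X for some X ∈ C. Then the submodule ⟨Y⟩ generated by Y is nice in G, i.e. every coset of ⟨Y⟩ in G contains an element of maximal p-height. -/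
noncomputable section

open UlmW

universe u

open UlmW

section Aux
open UlmW

variable {R : Type*} [CommRing R] {M : Type u} [AddCommGroup M] [Module R M]

theorem aux_ppow_zero (p : R) : ppow (M := M) p (0 : Ordinal.{u}) = ⊤ := by
  unfold ppow; exact Ordinal.limitRecOn_zero _ _ _

theorem aux_ppow_succ (p : R) (α : Ordinal.{u}) :
    ppow (M := M) p (α + 1) = Submodule.map (LinearMap.lsmul R M p) (ppow p α) := by
  unfold ppow; rw [Ordinal.add_one_eq_succ, Ordinal.limitRecOn_succ]

theorem aux_ppow_limit (p : R) {l : Ordinal.{u}} (h : Order.IsSuccLimit l) :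
    ppow (M := M) p l = ⨅ γ : Set.Iio l, ppow p γ.1 := by
  unfold ppow; rw [Ordinal.limitRecOn_limit _ _ _ _ h]

theorem aux_ppow_anti (p : R) : ∀ {α β : Ordinal.{u}}, β ≤ α → ppow (M := M) p α ≤ ppow p β := by
  intro α
  induction α using Ordinal.induction with
  | h α IH =>
    intro β hβ
    rcases eq_or_lt_of_le hβ with rfl | hlt
    · exact le_rfl
    rcases Ordinal.zero_or_succ_or_isSuccLimit α with h0 | ⟨a, ha⟩ | hl
    · exact absurd (h0 ▸ hlt) (not_lt_zero (a := β))
    · subst ha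
      have h1 : ppow (M := M) p (Order.succ a) ≤ ppow p a := by
        rw [← Ordinal.add_one_eq_succ, aux_ppow_succ]
        intro m hm
        obtain ⟨s, hs, rfl⟩ := Submodule.mem_map.mp hm
        simpa using Submodule.smul_mem _ p hs
      exact le_trans h1 (IH a (Order.lt_succ a) (Order.lt_succ_iff.mp hlt))
    · rw [aux_ppow_limit p hl]
      exact iInf_le _ (⟨β, hlt⟩ : Set.Iio α)

theorem aux_mem_ppow_all (p : R) {x : M}
    (h : ∀ α : Ordinal.{u}, x ∈ ppow p α → x ∈ ppow p (α + 1)) :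
    ∀ β : Ordinal.{u}, x ∈ ppow p β := by
  intro β
  induction β using Ordinal.induction with
  | h β IH =>
    rcases Ordinal.zero_or_succ_or_isSuccLimit β with h0 | ⟨a, ha⟩ | hl
    · rw [h0, aux_ppow_zero]; exact Submodule.mem_top
    · subst ha
      rw [← Ordinal.add_one_eq_succ]
      exact h a (IH a (Order.lt_succ a))
    · rw [aux_ppow_limit p hl, Submodule.mem_iInf]
      exact fun γ => IH γ.1 γ.2

theorem aux_le_pheight_iff {p : R} {x : M} {β : Ordinal.{u}} :
    (β : WithTop Ordinal.{u}) ≤ pheight p x ↔ x ∈ ppow p β := by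
  classical
  unfold pheight
  split_ifs with h
  · obtain ⟨h1, h2⟩ := h.choose_spec
    rw [WithTop.coe_le_coe]
    constructor
    · intro hle; exact aux_ppow_anti p hle h1
    · intro hx
      by_contra hc
      push_neg at hc
      have : h.choose + 1 ≤ β := by
        rw [Ordinal.add_one_eq_succ, Order.succ_le_iff]; exact hc
      exact h2 (aux_ppow_anti p this hx)
  · simp only [le_top, true_iff]
    push_neg at h
    exact aux_mem_ppow_all p h β

theorem aux_pheight_eq_top_iff {p : R} {x : M} :
    pheight p x = ⊤ ↔ ∀ β : Ordinal.{u}, x ∈ ppow p β := by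
  constructor
  · intro h β; rw [← aux_le_pheight_iff, h]; exact le_top
  · intro h
    by_contra hc
    obtain ⟨γ, hγ⟩ := WithTop.ne_top_iff_exists.mp hc
    have h2 := aux_le_pheight_iff.mpr (h (γ + 1))
    rw [← hγ, WithTop.coe_le_coe, Ordinal.add_one_eq_succ, Order.succ_le_iff] at h2
    exact lt_irrefl γ h2

theorem aux_pheight_mono {p : R} {x y : M}
    (h : ∀ β : Ordinal.{u}, x ∈ ppow p β → y ∈ ppow p β) :
    pheight p x ≤ pheight p y := by
  rcases eq_or_ne (pheight p x) ⊤ with ht | ht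
  · rw [ht]
    rw [aux_pheight_eq_top_iff.mpr (fun β => h β (aux_pheight_eq_top_iff.mp ht β))]
  · obtain ⟨γ, hγ⟩ := WithTop.ne_top_iff_exists.mp ht
    rw [← hγ]
    exact aux_le_pheight_iff.mpr (h γ (aux_le_pheight_iff.mp hγ.le))

theorem aux_pheight_smul_le (p r : R) (x : M) : pheight p x ≤ pheight p (r • x) :=
  aux_pheight_mono fun _ hβ => Submodule.smul_mem _ r hβ

theorem aux_pheight_unit_smul (p : R) (u : Rˣ) (x : M) :
    pheight p ((u : R) • x) = pheight p x := by
  refine le_antisymm (aux_pheight_mono fun β hβ => ?_) (aux_pheight_smul_le p _ x)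
  have h2 := Submodule.smul_mem (ppow p β) ((u⁻¹ : Rˣ) : R) hβ
  rwa [smul_smul, Units.inv_mul, one_smul] at h2

theorem aux_pheight_zero (p : R) : pheight p (0 : M) = ⊤ :=
  aux_pheight_eq_top_iff.mpr fun _ => Submodule.zero_mem _

theorem aux_pheight_neg (p : R) (x : M) : pheight p (-x) = pheight p x :=
  le_antisymm (aux_pheight_mono fun _ hβ => by simpa using Submodule.neg_mem _ hβ)
    (aux_pheight_mono fun _ hβ => Submodule.neg_mem _ hβ)

end Aux


theorem aux_zp_factor (p : ℤ) [Fact (Prime p)] {a : Zp p} (ha : a ≠ 0) :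
    ∃ (m : ℕ) (u : (Zp p)ˣ), a = (u : Zp p) * (p : Zp p) ^ m := by
  classical
  set I : Ideal ℤ := Ideal.span {p} with hI
  obtain ⟨⟨n, s⟩, hns⟩ := IsLocalization.surj (M := I.primeCompl) (S := Zp p) a
  have hs : IsUnit (algebraMap ℤ (Zp p) s) := IsLocalization.map_units _ s
  have hn : n ≠ 0 := by
    rintro rfl
    rw [map_zero] at hns
    exact ha ((hs.mul_left_eq_zero).mp hns)
  have hfin : FiniteMultiplicity p n :=
    Int.finiteMultiplicity_iff.mpr
      ⟨(Int.prime_iff_natAbs_prime.mp Fact.out).ne_one, hn⟩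
  obtain ⟨c0, hc0, hnd⟩ := hfin.exists_eq_pow_mul_and_not_dvd
  set m := multiplicity p n with hm
  clear_value m
  have hc0I : c0 ∈ I.primeCompl := by
    simpa [Ideal.primeCompl, I, Ideal.mem_span_singleton] using hnd
  have hcu : IsUnit (algebraMap ℤ (Zp p) c0) :=
    (IsLocalization.AtPrime.isUnit_to_map_iff (Zp p) I c0).mpr hc0I
  obtain ⟨su, hsu⟩ := hs
  obtain ⟨cu, hcu'⟩ := hcu
  refine ⟨m, cu * su⁻¹, ?_⟩
  have h2 : a = algebraMap ℤ (Zp p) n * ↑su⁻¹ := by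
    calc a = a * ((su : Zp p) * ↑su⁻¹) := by rw [Units.mul_inv, mul_one]
    _ = (a * (su : Zp p)) * ↑su⁻¹ := by ring
    _ = algebraMap ℤ (Zp p) n * ↑su⁻¹ := by rw [hsu, hns]
  have hmap : algebraMap ℤ (Zp p) p = (p : Zp p) := map_intCast _ p
  rw [h2, hc0, map_mul, map_pow, hmap, Units.val_mul, hcu']
  ring


theorem statement_9 (p : ℤ) [Fact (Prime p)] {G : Type u} [AddCommGroup G]
    [Module (Zp p) G]
    (C : Set (Set G)) (hC : IsPDBWrt (p : Zp p) C)
    (X : Set G) (hX : X ∈ C) (Y : Set G) (hYX : Y ⊆ X) :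
    IsNice (p : Zp p) (Submodule.span (Zp p) Y) := by
  classical
  obtain ⟨-, hCfin, hCdec, hCext⟩ := hC
  intro x
  set pp : Zp p := (p : Zp p) with hpp
  obtain ⟨Z, hZC, hXZ, a, ha0, haxZ⟩ := hCext X hX x
  have hZfin : Z.Finite := hCfin Z hZC
  have hYfin : Y.Finite := (hCfin X hX).subset hYX
  set ZF : Finset G := hZfin.toFinset with hZF
  set YF : Finset G := hYfin.toFinset with hYF
  have hYZ : Y ⊆ Z := hYX.trans hXZ
  have hYFZF : YF ⊆ ZF := by
    intro g hg
    rw [hYF, Set.Finite.mem_toFinset] at hg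
    rw [hZF, Set.Finite.mem_toFinset]
    exact hYZ hg
  have hsumZF : ∀ c : G → Zp p,
      pheight pp (∑ z ∈ ZF, c z • z) = ZF.inf fun z => pheight pp (c z • z) :=
    fun c => (hCdec Z hZC).2.2 ZF (by rw [hZF, Set.Finite.coe_toFinset]) c
  have hcoord : ∀ (c : G → Zp p) (β : Ordinal.{u}), (∑ z ∈ ZF, c z • z) ∈ ppow pp β →
      ∀ z ∈ ZF, (c z • z) ∈ ppow pp β := by
    intro c β hmem z hz
    have h1 : (β : WithTop Ordinal.{u}) ≤ pheight pp (∑ z ∈ ZF, c z • z) :=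
      aux_le_pheight_iff.mpr hmem
    rw [hsumZF c] at h1
    exact aux_le_pheight_iff.mp ((Finset.le_inf_iff.mp h1) z hz)
  -- factor a
  obtain ⟨k, u, hau⟩ := aux_zp_factor p ha0
  have hpkx : (pp ^ k) • x ∈ Submodule.span (Zp p) Z := by
    have he : (pp ^ k) • x = ((u⁻¹ : (Zp p)ˣ) : Zp p) • (a • x) := by
      rw [smul_smul, hau, ← mul_assoc, Units.inv_mul, one_mul]
    rw [he]
    exact Submodule.smul_mem _ _ haxZ
  obtain ⟨c, hc⟩ : ∃ c : G → Zp p, ∑ z ∈ ZF, c z • z = (pp ^ k) • x := by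
    have h1 : (pp ^ k) • x ∈ Submodule.span (Zp p) (ZF : Set G) := by
      rwa [hZF, Set.Finite.coe_toFinset]
    exact let ⟨f, _, hf⟩ := Submodule.mem_span_finset.mp h1; ⟨f, hf⟩
  -- the set of achieved heights
  set D : Set Ordinal.{u} :=
    {β | ∃ h ∈ Submodule.span (Zp p) Y, x + h ∈ ppow pp β} with hD
  have hD0 : (0 : Ordinal.{u}) ∈ D :=
    ⟨0, Submodule.zero_mem _, by rw [add_zero, aux_ppow_zero]; exact Submodule.mem_top⟩
  -- choice of coefficient functions
  have hrep : ∀ β : Ordinal.{u}, ∃ e : G → Zp p, β ∈ D →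
      (∀ g, g ∉ YF → e g = 0) ∧ x + ∑ z ∈ ZF, e z • z ∈ ppow pp β := by
    intro β
    by_cases hβ : β ∈ D
    · obtain ⟨h, hh, hmem⟩ := hβ
      have h1 : h ∈ Submodule.span (Zp p) (YF : Set G) := by
        rwa [hYF, Set.Finite.coe_toFinset]
      obtain ⟨f, -, hf⟩ := Submodule.mem_span_finset.mp h1
      refine ⟨fun g => if g ∈ YF then f g else 0, fun _ => ⟨fun g hg => if_neg hg, ?_⟩⟩
      have h2 : ∑ z ∈ ZF, (if z ∈ YF then f z else 0) • z = ∑ y ∈ YF, f y • y := by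
        rw [← Finset.sum_subset hYFZF (fun z _ hzny => by rw [if_neg hzny, zero_smul])]
        exact Finset.sum_congr rfl (fun y hy => by rw [if_pos hy])
      rw [h2, hf]
      exact hmem
    · exact ⟨0, fun h => absurd h hβ⟩
  choose e he using hrep
  have heY : ∀ β ∈ D, ∀ g, g ∉ YF → e β g = 0 := fun β hβ => (he β hβ).1
  have hemem : ∀ β ∈ D, x + ∑ z ∈ ZF, e β z • z ∈ ppow pp β := fun β hβ => (he β hβ).2
  -- (*) : coordinates of differences
  have hstar : ∀ β ∈ D, ∀ β' ∈ D, ∀ z ∈ ZF,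
      ((e β' z - e β z) • z) ∈ ppow pp (min β β') := by
    intro β hβ β' hβ' z hz
    have h1 : (∑ w ∈ ZF, (e β' w - e β w) • w) ∈ ppow pp (min β β') := by
      have heq : ∑ w ∈ ZF, (e β' w - e β w) • w
          = (x + ∑ w ∈ ZF, e β' w • w) - (x + ∑ w ∈ ZF, e β w • w) := by
        rw [add_sub_add_left_eq_sub, ← Finset.sum_sub_distrib]
        exact Finset.sum_congr rfl (fun w _ => by rw [sub_smul])
      rw [heq]
      exact Submodule.sub_mem _
        (aux_ppow_anti pp (min_le_right β β') (hemem β' hβ'))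
        (aux_ppow_anti pp (min_le_left β β') (hemem β hβ))
    exact hcoord _ _ h1 z hz
  -- (**) : coordinates of p^k • (x + h_β)
  have hstar2 : ∀ β ∈ D, ∀ z ∈ ZF, ((c z + pp ^ k * e β z) • z) ∈ ppow pp β := by
    intro β hβ z hz
    have h1 : (∑ w ∈ ZF, (c w + pp ^ k * e β w) • w) ∈ ppow pp β := by
      have heq : ∑ w ∈ ZF, (c w + pp ^ k * e β w) • w
          = (pp ^ k) • (x + ∑ w ∈ ZF, e β w • w) := by
        rw [smul_add, ← hc, Finset.smul_sum, ← Finset.sum_add_distrib]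
        exact Finset.sum_congr rfl (fun w _ => by rw [add_smul, smul_smul])
      rw [heq]
      exact Submodule.smul_mem _ _ (hemem β hβ)
    exact hcoord _ _ h1 z hz
  -- per-coordinate limit coefficients
  have percoord : ∀ y : G, ∃ es : Zp p, y ∈ YF → ∀ β ∈ D, ∃ γ ∈ D, β ≤ γ ∧
      ∀ β'' ∈ D, γ ≤ β'' → ((es - e β'' y) • y) ∈ ppow pp β := by
    intro y
    by_cases hyYF : y ∈ YF
    swap
    · exact ⟨0, fun h => absurd h hyYF⟩
    have hyZF : y ∈ ZF := hYFZF hyYF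
    by_cases hi : ∃ β1 ∈ D, ∀ β ∈ D, ((e β1 y - e β y) • y) ∈ ppow pp β
    · obtain ⟨β1, hβ1, H1⟩ := hi
      refine ⟨e β1 y, fun _ β hβ => ⟨β, hβ, le_rfl, fun β'' hβ'' hle => ?_⟩⟩
      exact aux_ppow_anti pp hle (H1 β'' hβ'')
    · push_neg at hi
      set U : ℕ → WithTop Ordinal.{u} := fun m => pheight pp ((pp ^ m) • y) with hU
      have hUmono : ∀ {m n : ℕ}, m ≤ n → U m ≤ U n := by
        intro m n hmn
        refine aux_pheight_mono fun β hβ => ?_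
        have h2 := Submodule.smul_mem (ppow pp β) (pp ^ (n - m)) hβ
        rwa [smul_smul, ← pow_add, Nat.sub_add_cancel hmn] at h2
      have hheight : ∀ d : Zp p, d ≠ 0 → ∃ m : ℕ, pheight pp (d • y) = U m := by
        intro d hd
        obtain ⟨m, v, hdv⟩ := aux_zp_factor p hd
        refine ⟨m, ?_⟩
        rw [hdv, hU]
        rw [mul_smul]
        exact aux_pheight_unit_smul pp v _
      -- interleaving
      have hinter : ∀ β1 ∈ D, ∃ β ∈ D, ∃ m : ℕ,
          (β1 : WithTop Ordinal.{u}) ≤ U m ∧ U m < (β : WithTop Ordinal.{u}) := by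
        intro β1 hβ1
        obtain ⟨β, hβ, hnot⟩ := hi β1 hβ1
        have hd : e β1 y - e β y ≠ 0 := by
          rintro hd0
          exact hnot (by rw [hd0, zero_smul]; exact Submodule.zero_mem _)
        obtain ⟨m, hm⟩ := hheight _ hd
        have hmem : ((e β1 y - e β y) • y) ∈ ppow pp (min β β1) := hstar β hβ β1 hβ1 y hyZF
        have hge : ((min β β1 : Ordinal.{u}) : WithTop Ordinal.{u}) ≤ U m := by
          rw [← hm]; exact aux_le_pheight_iff.mpr hmem
        have hlt : U m < (β : WithTop Ordinal.{u}) := by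
          rw [← hm]
          by_contra hcon
          push_neg at hcon
          exact hnot (aux_le_pheight_iff.mp hcon)
        have hββ1 : β1 < β := by
          by_contra hcon
          push_neg at hcon
          have h2 : (β : WithTop Ordinal.{u}) ≤ U m := by
            rw [← min_eq_left hcon]
            exact hge
          exact absurd (lt_of_le_of_lt h2 hlt) (lt_irrefl _)
        refine ⟨β, hβ, m, ?_, hlt⟩
        refine le_trans ?_ hge
        rw [WithTop.coe_le_coe]
        exact le_min hββ1.le le_rfl
      -- growth of U along D
      have hgrow : ∀ m : ℕ, ∃ β ∈ D, U m < (β : WithTop Ordinal.{u}) := by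
        intro m
        induction m with
        | zero =>
          obtain ⟨β, hβ, m1, _, hlt⟩ := hinter 0 hD0
          exact ⟨β, hβ, lt_of_le_of_lt (hUmono (Nat.zero_le m1)) hlt⟩
        | succ m IH =>
          obtain ⟨β, hβ, hltm⟩ := IH
          obtain ⟨β2, hβ2, m1, hge, hlt⟩ := hinter β hβ
          have hm1 : m + 1 ≤ m1 := by
            by_contra hcon
            push_neg at hcon
            have h3 : U m1 ≤ U m := hUmono (Nat.lt_succ_iff.mp hcon)
            exact absurd (lt_of_le_of_lt (hge.trans h3) hltm) (lt_irrefl _)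
          exact ⟨β2, hβ2, lt_of_le_of_lt (hUmono hm1) hlt⟩
      -- divisibility of c y by pp ^ k
      obtain ⟨βk, hβk, hltk⟩ := hgrow k
      obtain ⟨w, hw⟩ : ∃ w : Zp p, c y = pp ^ k * w := by
        rcases eq_or_ne (c y + pp ^ k * e βk y) 0 with hA0 | hA0
        · exact ⟨-(e βk y), by linear_combination hA0⟩
        · obtain ⟨m, v, hAv⟩ := aux_zp_factor p hA0
          have h1 : (βk : WithTop Ordinal.{u}) ≤ U m := by
            have h2 := aux_le_pheight_iff.mpr (hstar2 βk hβk y hyZF)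
            have h3 : pheight pp ((c y + pp ^ k * e βk y) • y) = U m := by
              rw [hAv, hU, mul_smul]; exact aux_pheight_unit_smul pp v _
            rwa [h3] at h2
          have hkm : k ≤ m := by
            by_contra hcon
            push_neg at hcon
            exact absurd (lt_of_le_of_lt (h1.trans (hUmono (le_of_lt hcon))) hltk)
              (lt_irrefl _)
          refine ⟨(v : Zp p) * pp ^ (m - k) - e βk y, ?_⟩
          have h4 : c y = (v : Zp p) * pp ^ m - pp ^ k * e βk y := by
            rw [← hAv]; ring
          rw [h4, mul_sub]
          congr 1
          rw [← mul_assoc, mul_comm (pp ^ k) ((v : Zp p)), mul_assoc, ← pow_add,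
            Nat.add_sub_cancel' hkm]
      refine ⟨-w, fun _ β hβ => ?_⟩
      obtain ⟨βm, hβm, m0, hm0, _⟩ := hinter β hβ
      obtain ⟨βb, hβb, hltb⟩ := hgrow (m0 + k)
      have hmaxD : max β βb ∈ D := by
        rcases le_total β βb with h1 | h1
        · rw [max_eq_right h1]; exact hβb
        · rw [max_eq_left h1]; exact hβ
      refine ⟨max β βb, hmaxD, le_max_left _ _, fun β'' hβ'' hγle => ?_⟩
      have hAeq : c y + pp ^ k * e β'' y = pp ^ k * (e β'' y + w) := by
        rw [hw]; ring
      rcases eq_or_ne (e β'' y + w) 0 with hd0 | hd0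
      · have h5 : (-w : Zp p) - e β'' y = 0 := by linear_combination -hd0
        rw [h5, zero_smul]
        exact Submodule.zero_mem _
      · obtain ⟨m, v, hdv⟩ := aux_zp_factor p hd0
        have h6 : pheight pp ((c y + pp ^ k * e β'' y) • y) = U (m + k) := by
          rw [hAeq, hdv, hU]
          have h7 : pp ^ k * ((v : Zp p) * pp ^ m) = (v : Zp p) * pp ^ (m + k) := by
            rw [pow_add]; ring
          rw [h7, mul_smul]
          exact aux_pheight_unit_smul pp v _
        have h8 : (βb : WithTop Ordinal.{u}) ≤ U (m + k) := by
          have h9 := aux_le_pheight_iff.mpr (hstar2 β'' hβ'' y hyZF)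
          rw [h6] at h9
          refine le_trans ?_ h9
          rw [WithTop.coe_le_coe]
          exact le_trans (le_max_right β βb) hγle
        have hm0m : m0 ≤ m := by
          by_contra hcon
          push_neg at hcon
          have h10 : U (m + k) ≤ U (m0 + k) := hUmono (by omega)
          exact absurd (lt_of_le_of_lt (h8.trans h10) hltb) (lt_irrefl _)
        have h11 : ((-w : Zp p) - e β'' y) • y ∈ ppow pp β := by
          have h12 : (-w : Zp p) - e β'' y = -(e β'' y + w) := by ring
          rw [h12, neg_smul]
          refine Submodule.neg_mem _ ?_
          refine aux_le_pheight_iff.mp ?_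
          have h13 : pheight pp ((e β'' y + w) • y) = U m := by
            rw [hdv, hU, mul_smul]; exact aux_pheight_unit_smul pp v _
          rw [h13]
          exact hm0.trans (hUmono hm0m)
        exact h11
  choose estar hestar using percoord
  -- the limit element works
  have hkey : ∀ β ∈ D, x + ∑ y ∈ YF, estar y • y ∈ ppow pp β := by
    intro β hβ
    have hγ : ∀ y : G, ∃ γ : Ordinal.{u}, γ ∈ D ∧ β ≤ γ ∧
        (y ∈ YF → ∀ β'' ∈ D, γ ≤ β'' → ((estar y - e β'' y) • y) ∈ ppow pp β) := by
      intro y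
      by_cases hy : y ∈ YF
      · obtain ⟨γ, hγD, hβγ, hprop⟩ := hestar y hy β hβ
        exact ⟨γ, hγD, hβγ, fun _ => hprop⟩
      · exact ⟨β, hβ, le_rfl, fun h => absurd h hy⟩
    choose γf hγf using hγ
    obtain ⟨β', hβ'D, hββ', hγβ'⟩ : ∃ β', β' ∈ D ∧ β ≤ β' ∧ ∀ y ∈ YF, γf y ≤ β' := by
      rcases YF.eq_empty_or_nonempty with hYe | hYne
      · exact ⟨β, hβ, le_rfl, by simp [hYe]⟩
      · obtain ⟨y0, hy0, hsup⟩ := Finset.exists_mem_eq_sup' hYne γf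
        refine ⟨max β (YF.sup' hYne γf), ?_, le_max_left _ _,
          fun y hy => le_trans (Finset.le_sup' γf hy) (le_max_right _ _)⟩
        rcases le_total β (YF.sup' hYne γf) with h1 | h1
        · rw [max_eq_right h1, hsup]; exact (hγf y0).1
        · rw [max_eq_left h1]; exact hβ
    have hx1 : x + ∑ z ∈ ZF, e β' z • z ∈ ppow pp β :=
      aux_ppow_anti pp hββ' (hemem β' hβ'D)
    have hx2 : (∑ y ∈ YF, (estar y - e β' y) • y) ∈ ppow pp β :=
      Submodule.sum_mem _ (fun y hy => (hγf y).2.2 hy β' hβ'D (hγβ' y hy))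
    have heq : x + ∑ y ∈ YF, estar y • y
        = (x + ∑ z ∈ ZF, e β' z • z) + ∑ y ∈ YF, (estar y - e β' y) • y := by
      have hz : ∑ z ∈ ZF, e β' z • z = ∑ y ∈ YF, e β' y • y :=
        (Finset.sum_subset hYFZF
          (fun z _ hnz => by rw [heY β' hβ'D z hnz, zero_smul])).symm
      rw [hz, add_assoc, ← Finset.sum_add_distrib]
      congr 1
      exact Finset.sum_congr rfl (fun y _ => by rw [← add_smul]; ring_nf)
    rw [heq]
    exact Submodule.add_mem _ hx1 hx2
  -- conclude
  refine ⟨∑ y ∈ YF, estar y • y,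
    Submodule.sum_mem _ (fun y hy => Submodule.smul_mem _ _
      (Submodule.subset_span (by rwa [hYF, Set.Finite.mem_toFinset] at hy))), ?_⟩
  intro h' hh'
  rcases eq_or_ne (pheight pp (x + h')) ⊤ with ht | ht
  · have hall : ∀ β : Ordinal.{u}, x + h' ∈ ppow pp β := aux_pheight_eq_top_iff.mp ht
    have h2 : pheight pp (x + ∑ y ∈ YF, estar y • y) = ⊤ :=
      aux_pheight_eq_top_iff.mpr (fun β => hkey β ⟨h', hh', hall β⟩)
    rw [ht, h2]
  · obtain ⟨γ, hγ⟩ := WithTop.ne_top_iff_exists.mp ht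
    rw [← hγ]
    exact aux_le_pheight_iff.mpr (hkey γ ⟨h', hh', aux_le_pheight_iff.mp hγ.le⟩)


end
end
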